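/- arXiv:2412.05900 — 5 statements merged into one kernel-verified Lean document; each statement's English description precedes it below -/
import Mathlib

section
/- The sparse erosion distance d̂_E is an extended pseudometric: for any ℝ^d-persistence modules M, N, O and interval families 𝓘, 𝓙, 𝓚, it is nonnegative, symmetric, vanishes on identical pairs, and satisfies d̂_E((dgm_M, 𝓘), (dgm_O, 𝓚)) ≤ d̂_E((dgm_M, 𝓘), (dgm_N, 𝓙)) + d̂_E((dgm_N, 𝓙), (dgm_O, 𝓚)). -/
/-- The closed `ε`-ball around `p` in `ℝ^d` w.r.t. the supremum distance,
described as an order interval. -/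
def supBall {d : ℕ} (p : Fin d → ℝ) (ε : ℝ) : Set (Fin d → ℝ) :=
  {q | (fun i => p i - ε) ≤ q ∧ q ≤ fun i => p i + ε}

/-- The `ε`-thickening `I^ε = ⋃_{p ∈ I} B_ε^□(p)` of a subset of `ℝ^d`. -/
def thick {d : ℕ} (I : Set (Fin d → ℝ)) (ε : ℝ) : Set (Fin d → ℝ) :=
  ⋃ p ∈ I, supBall p ε

/-- An interval of the poset `ℝ^d`: nonempty, order-convex, and connected via
chains of pairwise-comparable consecutive points. -/
def IsPosetInterval {d : ℕ} (I : Set (Fin d → ℝ)) : Prop :=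
  I.Nonempty ∧
  (∀ p ∈ I, ∀ q ∈ I, ∀ r, p ≤ r → r ≤ q → r ∈ I) ∧
  (∀ p ∈ I, ∀ q ∈ I, ∃ (n : ℕ) (c : Fin (n + 1) → Fin d → ℝ),
    c 0 = p ∧ c (Fin.last n) = q ∧ (∀ i, c i ∈ I) ∧
    ∀ i : Fin n, c i.castSucc ≤ c i.succ ∨ c i.succ ≤ c i.castSucc)

/-- A correspondence between families `A` and `B`: a left- and right-total
relation `R ⊆ A × B`. -/
def IsCorr {α : Type*} (A B : Set (Set α)) (R : Set (Set α × Set α)) : Prop :=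
  R ⊆ A ×ˢ B ∧ (∀ I ∈ A, ∃ J ∈ B, (I, J) ∈ R) ∧ (∀ J ∈ B, ∃ I ∈ A, (I, J) ∈ R)

/-- An `ε`-correspondence between families of intervals of `ℝ^d`. -/
def IsEpsCorr {d : ℕ} (A B : Set (Set (Fin d → ℝ))) (ε : ℝ)
    (R : Set (Set (Fin d → ℝ) × Set (Fin d → ℝ))) : Prop :=
  IsCorr A B R ∧ ∀ p ∈ R, p.2 ⊆ thick p.1 ε ∧ p.1 ⊆ thick p.2 ε

open scoped ENNReal

/-- `d̂(𝓘,𝓙) := inf {ε > 0 : ∃ an ε-correspondence between 𝓘 and 𝓙}`,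
with `inf ∅ = ∞`. -/
noncomputable def dhat {d : ℕ} (A B : Set (Set (Fin d → ℝ))) : ℝ≥0∞ :=
  sInf (ENNReal.ofReal '' {ε : ℝ | 0 < ε ∧ ∃ R, IsEpsCorr A B ε R})

/-- The sparse erosion distance between `(dgm_M, 𝓘)` and `(dgm_N, 𝓙)`, with the
generalized rank invariants abstracted as functions `rkM, rkN` on subsets of `ℝ^d`. -/
noncomputable def dEhat {d : ℕ} (rkM rkN : Set (Fin d → ℝ) → ℕ)
    (A B : Set (Set (Fin d → ℝ))) : ℝ≥0∞ :=
  sInf (ENNReal.ofReal '' {ε : ℝ | 0 < ε ∧ ∃ R, IsEpsCorr A B ε R ∧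
    ∀ p ∈ R, ∀ δ : ℝ, 0 ≤ δ →
      rkN (thick p.2 (ε + δ)) ≤ rkM (thick p.1 δ) ∧
      rkM (thick p.1 (ε + δ)) ≤ rkN (thick p.2 δ)})

/- Auxiliary lemmas. -/

lemma mem_thick_iff {d : ℕ} {I : Set (Fin d → ℝ)} {ε : ℝ} {x : Fin d → ℝ} :
    x ∈ thick I ε ↔ ∃ p ∈ I, x ∈ supBall p ε := by
  simp [thick]

lemma supBall_mono {d : ℕ} (p : Fin d → ℝ) {ε ε' : ℝ} (h : ε ≤ ε') :
    supBall p ε ⊆ supBall p ε' := by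
  intro q hq
  refine ⟨fun i => ?_, fun i => ?_⟩
  · have := hq.1 i; simp only at this ⊢; linarith
  · have := hq.2 i; simp only at this ⊢; linarith

lemma subset_thick {d : ℕ} (I : Set (Fin d → ℝ)) {ε : ℝ} (hε : 0 ≤ ε) :
    I ⊆ thick I ε := by
  intro p hp
  refine mem_thick_iff.2 ⟨p, hp, fun i => ?_, fun i => ?_⟩ <;> simp only <;> linarith

lemma thick_mono_eps {d : ℕ} (I : Set (Fin d → ℝ)) {ε ε' : ℝ} (h : ε ≤ ε') :
    thick I ε ⊆ thick I ε' := by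
  intro x hx
  obtain ⟨p, hp, hx⟩ := mem_thick_iff.1 hx
  exact mem_thick_iff.2 ⟨p, hp, supBall_mono p h hx⟩

lemma thick_mono_set {d : ℕ} {I J : Set (Fin d → ℝ)} (h : I ⊆ J) (ε : ℝ) :
    thick I ε ⊆ thick J ε := by
  intro x hx
  obtain ⟨p, hp, hx⟩ := mem_thick_iff.1 hx
  exact mem_thick_iff.2 ⟨p, h hp, hx⟩

lemma thick_thick {d : ℕ} (I : Set (Fin d → ℝ)) (ε₁ ε₂ : ℝ) :
    thick (thick I ε₁) ε₂ ⊆ thick I (ε₁ + ε₂) := by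
  intro x hx
  obtain ⟨q, hq, hx⟩ := mem_thick_iff.1 hx
  obtain ⟨p, hp, hq⟩ := mem_thick_iff.1 hq
  refine mem_thick_iff.2 ⟨p, hp, fun i => ?_, fun i => ?_⟩
  · have h1 := hq.1 i; have h2 := hx.1 i; simp only at h1 h2 ⊢; linarith
  · have h1 := hq.2 i; have h2 := hx.2 i; simp only at h1 h2 ⊢; linarith

lemma le_sInf_add_sInf {a : ℝ≥0∞} {A B : Set ℝ≥0∞}
    (h : ∀ x ∈ A, ∀ y ∈ B, a ≤ x + y) : a ≤ sInf A + sInf B := by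
  rw [ENNReal.sInf_add]
  refine le_iInf₂ fun x hx => ?_
  rw [add_comm x (sInf B), ENNReal.sInf_add]
  exact le_iInf₂ fun y hy => (h x hx y hy).trans_eq (add_comm x y)

/-- The sparse erosion distance `d̂_E` is an extended pseudometric: it is
nonnegative, symmetric, vanishes on identical pairs, and satisfies the triangle
inequality. The generalized rank invariants of `M`, `N`, `O` are abstracted as
functions on subsets of `ℝ^d` that are inclusion-reversing. -/
theorem dEhat_pseudometric {d : ℕ} (rkM rkN rkO : Set (Fin d → ℝ) → ℕ)
    (hM : ∀ I J : Set (Fin d → ℝ), I ⊆ J → rkM J ≤ rkM I)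
    (hN : ∀ I J : Set (Fin d → ℝ), I ⊆ J → rkN J ≤ rkN I)
    (hO : ∀ I J : Set (Fin d → ℝ), I ⊆ J → rkO J ≤ rkO I)
    (𝓘 𝓙 𝓚 : Set (Set (Fin d → ℝ)))
    (h𝓘 : ∀ I ∈ 𝓘, IsPosetInterval I) (h𝓙 : ∀ J ∈ 𝓙, IsPosetInterval J)
    (h𝓚 : ∀ K ∈ 𝓚, IsPosetInterval K)
    (hne𝓘 : 𝓘.Nonempty) (hne𝓙 : 𝓙.Nonempty) (hne𝓚 : 𝓚.Nonempty) :
    0 ≤ dEhat rkM rkN 𝓘 𝓙 ∧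
    dEhat rkM rkN 𝓘 𝓙 = dEhat rkN rkM 𝓙 𝓘 ∧
    dEhat rkM rkM 𝓘 𝓘 = 0 ∧
    dEhat rkM rkO 𝓘 𝓚 ≤ dEhat rkM rkN 𝓘 𝓙 + dEhat rkN rkO 𝓙 𝓚 := by
  refine ⟨zero_le, ?_, ?_, ?_⟩
  · -- symmetry
    have key : ∀ (rk1 rk2 : Set (Fin d → ℝ) → ℕ) (A B : Set (Set (Fin d → ℝ))),
        {ε : ℝ | 0 < ε ∧ ∃ R, IsEpsCorr A B ε R ∧
          ∀ p ∈ R, ∀ δ : ℝ, 0 ≤ δ →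
            rk2 (thick p.2 (ε + δ)) ≤ rk1 (thick p.1 δ) ∧
            rk1 (thick p.1 (ε + δ)) ≤ rk2 (thick p.2 δ)} ⊆
        {ε : ℝ | 0 < ε ∧ ∃ R, IsEpsCorr B A ε R ∧
          ∀ p ∈ R, ∀ δ : ℝ, 0 ≤ δ →
            rk1 (thick p.2 (ε + δ)) ≤ rk2 (thick p.1 δ) ∧
            rk2 (thick p.1 (ε + δ)) ≤ rk1 (thick p.2 δ)} := by
      rintro rk1 rk2 A B ε ⟨hε, R, ⟨⟨hsub, hlt, hrt⟩, hthick⟩, hrk⟩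
      refine ⟨hε, Prod.swap '' R, ⟨⟨?_, ?_, ?_⟩, ?_⟩, ?_⟩
      · rintro _ ⟨⟨I, J⟩, hIJ, rfl⟩
        exact ⟨(hsub hIJ).2, (hsub hIJ).1⟩
      · intro J hJ
        obtain ⟨I, hI, hIJ⟩ := hrt J hJ
        exact ⟨I, hI, ⟨(I, J), hIJ, rfl⟩⟩
      · intro I hI
        obtain ⟨J, hJ, hIJ⟩ := hlt I hI
        exact ⟨J, hJ, ⟨(I, J), hIJ, rfl⟩⟩
      · rintro _ ⟨⟨I, J⟩, hIJ, rfl⟩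
        exact ⟨(hthick _ hIJ).2, (hthick _ hIJ).1⟩
      · rintro _ ⟨⟨I, J⟩, hIJ, rfl⟩ δ hδ
        exact ⟨(hrk _ hIJ δ hδ).2, (hrk _ hIJ δ hδ).1⟩
    unfold dEhat
    exact congrArg _ (congrArg _
      (le_antisymm (key rkM rkN 𝓘 𝓙) (key rkN rkM 𝓙 𝓘)))
  · -- vanishing on identical pairs
    have h : ∀ ε : ℝ, 0 < ε → dEhat rkM rkM 𝓘 𝓘 ≤ ENNReal.ofReal ε := by
      intro ε hε
      refine sInf_le ⟨ε, ⟨hε, {p | p.1 = p.2 ∧ p.1 ∈ 𝓘}, ⟨⟨?_, ?_, ?_⟩, ?_⟩, ?_⟩, rfl⟩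
      · rintro ⟨I, J⟩ ⟨heq, hI⟩; simp only at heq hI; subst heq; exact ⟨hI, hI⟩
      · intro I hI; exact ⟨I, hI, rfl, hI⟩
      · intro I hI; exact ⟨I, hI, rfl, hI⟩
      · rintro ⟨I, J⟩ ⟨heq, hI⟩; simp only at heq; subst heq
        exact ⟨subset_thick _ hε.le, subset_thick _ hε.le⟩
      · rintro ⟨I, J⟩ ⟨heq, hI⟩ δ hδ; simp only at heq ⊢; subst heq
        constructor <;>
          exact hM _ _ (thick_mono_eps _ (by linarith))
    refine le_antisymm ?_ zero_le
    refine ENNReal.le_of_forall_pos_le_add fun ε hε _ => ?_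
    rw [zero_add]
    have := h ε (by exact_mod_cast hε)
    simpa using this
  · -- triangle inequality
    unfold dEhat
    refine le_sInf_add_sInf ?_
    rintro _ ⟨ε₁, ⟨hε₁, R₁, ⟨⟨hsub₁, hlt₁, hrt₁⟩, hthick₁⟩, hrk₁⟩, rfl⟩
    rintro _ ⟨ε₂, ⟨hε₂, R₂, ⟨⟨hsub₂, hlt₂, hrt₂⟩, hthick₂⟩, hrk₂⟩, rfl⟩
    rw [← ENNReal.ofReal_add hε₁.le hε₂.le]
    refine sInf_le ⟨ε₁ + ε₂, ⟨by linarith,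
      {p | ∃ J, (p.1, J) ∈ R₁ ∧ (J, p.2) ∈ R₂}, ⟨⟨?_, ?_, ?_⟩, ?_⟩, ?_⟩, rfl⟩
    · rintro ⟨I, K⟩ ⟨J, hIJ, hJK⟩
      exact ⟨(hsub₁ hIJ).1, (hsub₂ hJK).2⟩
    · intro I hI
      obtain ⟨J, hJ, hIJ⟩ := hlt₁ I hI
      obtain ⟨K, hK, hJK⟩ := hlt₂ J hJ
      exact ⟨K, hK, J, hIJ, hJK⟩
    · intro K hK
      obtain ⟨J, hJ, hJK⟩ := hrt₂ K hK
      obtain ⟨I, hI, hIJ⟩ := hrt₁ J hJ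
      exact ⟨I, hI, J, hIJ, hJK⟩
    · rintro ⟨I, K⟩ ⟨J, hIJ, hJK⟩
      constructor
      · refine ((hthick₂ _ hJK).1.trans ?_)
        refine (thick_mono_set (hthick₁ _ hIJ).1 ε₂).trans ?_
        exact thick_thick I ε₁ ε₂
      · refine ((hthick₁ _ hIJ).2.trans ?_)
        refine (thick_mono_set (hthick₂ _ hJK).2 ε₁).trans ?_
        have := thick_thick K ε₂ ε₁
        rwa [add_comm ε₂ ε₁] at this
    · rintro ⟨I, K⟩ ⟨J, hIJ, hJK⟩ δ hδ
      constructor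
      · have h1 := (hrk₂ (J, K) hJK (ε₁ + δ) (by linarith)).1
        have h2 := (hrk₁ (I, J) hIJ δ hδ).1
        simp only at h1 h2 ⊢
        calc rkO (thick K (ε₁ + ε₂ + δ)) = rkO (thick K (ε₂ + (ε₁ + δ))) := by
              ring_nf
            _ ≤ rkN (thick J (ε₁ + δ)) := h1
            _ ≤ rkM (thick I δ) := h2
      · have h1 := (hrk₁ (I, J) hIJ (ε₂ + δ) (by linarith)).2
        have h2 := (hrk₂ (J, K) hJK δ hδ).2
        simp only at h1 h2 ⊢
        calc rkM (thick I (ε₁ + ε₂ + δ)) = rkM (thick I (ε₁ + (ε₂ + δ))) := by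
              ring_nf
            _ ≤ rkN (thick J (ε₂ + δ)) := h1
            _ ≤ rkO (thick K δ) := h2
end

section
/- If 𝓘 = 𝓙 and 𝓘 is closed under thickening, then the sparse erosion distance is bounded above by the erosion distance: d̂_E((dgm_M, 𝓘), (dgm_N, 𝓘)) ≤ d_E(dgm_M^𝓘, dgm_N^𝓘). -/
open scoped ENNReal

/-- The erosion distance `d_E` between the GPDs of `M` and `N` over a family `𝓘`
closed under thickening, with the rank invariants abstracted as functions. -/
noncomputable def dE {d : ℕ} (rkM rkN : Set (Fin d → ℝ) → ℕ)
    (A : Set (Set (Fin d → ℝ))) : ℝ≥0∞ :=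
  sInf (ENNReal.ofReal '' {ε : ℝ | 0 < ε ∧
    ∀ I ∈ A, rkN (thick I ε) ≤ rkM I ∧ rkM (thick I ε) ≤ rkN I})


lemma mem_thick_self {d : ℕ} {I : Set (Fin d → ℝ)} {ε : ℝ} (hε : 0 ≤ ε) :
    I ⊆ thick I ε := by
  intro p hp
  refine Set.mem_iUnion₂.mpr ⟨p, hp, fun i => ?_, fun i => ?_⟩ <;> simp <;> linarith

lemma thick_thick_subset {d : ℕ} (I : Set (Fin d → ℝ)) (ε δ : ℝ) :
    thick (thick I δ) ε ⊆ thick I (ε + δ) := by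
  intro q hq
  simp only [thick, Set.mem_iUnion, supBall, Set.mem_setOf_eq] at *
  obtain ⟨r, ⟨p, hp, h1, h2⟩, h3, h4⟩ := hq
  refine ⟨p, hp, fun i => ?_, fun i => ?_⟩
  · have := h1 i; have := h3 i; simp at *; linarith
  · have := h2 i; have := h4 i; simp at *; linarith

/-- If `𝓘 = 𝓙` is closed under thickening, the sparse erosion distance is
bounded above by the erosion distance. -/
theorem dEhat_le_dE {d : ℕ} (rkM rkN : Set (Fin d → ℝ) → ℕ)
    (hM : ∀ I J : Set (Fin d → ℝ), I ⊆ J → rkM J ≤ rkM I)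
    (hN : ∀ I J : Set (Fin d → ℝ), I ⊆ J → rkN J ≤ rkN I)
    (𝓘 : Set (Set (Fin d → ℝ)))
    (h𝓘 : ∀ I ∈ 𝓘, IsPosetInterval I) (hne𝓘 : 𝓘.Nonempty)
    (hclosed : ∀ I ∈ 𝓘, ∀ ε : ℝ, 0 ≤ ε → thick I ε ∈ 𝓘) :
    dEhat rkM rkN 𝓘 𝓘 ≤ dE rkM rkN 𝓘 := by
  apply sInf_le_sInf
  rintro x ⟨ε, ⟨hε, hcond⟩, rfl⟩
  refine ⟨ε, ⟨hε, {p | p.1 ∈ 𝓘 ∧ p.2 = p.1}, ⟨⟨?_, ?_, ?_⟩, ?_⟩, ?_⟩, rfl⟩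
  · rintro ⟨I, J⟩ ⟨hI, heq⟩; simp only at hI heq; subst heq; exact ⟨hI, hI⟩
  · exact fun I hI => ⟨I, hI, hI, rfl⟩
  · exact fun J hJ => ⟨J, hJ, hJ, rfl⟩
  · rintro ⟨I, J⟩ ⟨hI, heq⟩; simp only at hI heq; subst heq
    exact ⟨mem_thick_self hε.le, mem_thick_self hε.le⟩
  · rintro ⟨I, J⟩ ⟨hI, heq⟩; simp only at hI heq; subst heq; intro δ hδ
    have h := hcond (thick J δ) (hclosed J hI δ hδ)
    exact ⟨le_trans (hN _ _ (thick_thick_subset J ε δ)) h.1,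
           le_trans (hM _ _ (thick_thick_subset J ε δ)) h.2⟩
end

section
/- Let I and J be (2,1)-intervals of ℝ² parametrized by vectors v_I = (x₁, y₁, a, b, c, d) and v_J = (x₂, y₂, e, f, g, h) in ℝ⁶ (with a,b,c,d,e,f,g,h ≥ 0), so that I has minimal points (x₁−b, y₁), (x₁, y₁−c) and maximal point (x₁+d, y₁+a), and analogously for J. If ‖v_I − v_J‖_∞ ≤ ε, then inf{δ ≥ 0 : J ⊆ I^δ and I ⊆ J^δ} ≤ 2ε. -/
/-- The closed `ε`-ball in `ℝ²` around `p` w.r.t. the supremum distance, as an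
order interval. -/
def supBall2 (p : ℝ × ℝ) (ε : ℝ) : Set (ℝ × ℝ) :=
  {q | p.1 - ε ≤ q.1 ∧ p.2 - ε ≤ q.2 ∧ q.1 ≤ p.1 + ε ∧ q.2 ≤ p.2 + ε}

/-- The `ε`-thickening of a subset of `ℝ²`. -/
def thick2 (I : Set (ℝ × ℝ)) (ε : ℝ) : Set (ℝ × ℝ) :=
  ⋃ p ∈ I, supBall2 p ε

/-- An interval of the poset `ℝ²`: nonempty, order-convex, connected via chains
of pairwise-comparable consecutive points. -/
def IsInterval2 (I : Set (ℝ × ℝ)) : Prop :=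
  I.Nonempty ∧
  (∀ p ∈ I, ∀ q ∈ I, ∀ r, p ≤ r → r ≤ q → r ∈ I) ∧
  (∀ p ∈ I, ∀ q ∈ I, ∃ (n : ℕ) (c : Fin (n + 1) → ℝ × ℝ),
    c 0 = p ∧ c (Fin.last n) = q ∧ (∀ i, c i ∈ I) ∧
    ∀ i : Fin n, c i.castSucc ≤ c i.succ ∨ c i.succ ≤ c i.castSucc)

/-- The `(2,1)`-interval of `ℝ²` with minimal points `(x-b, y)`, `(x, y-c)` and
maximal point `(x+d, y+a)`; a `(1,1)`-interval corresponds to `b = c = 0`. -/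
def int21 (x y a b c d : ℝ) : Set (ℝ × ℝ) :=
  {p | (((x - b, y) : ℝ × ℝ) ≤ p ∨ ((x, y - c) : ℝ × ℝ) ≤ p) ∧ p ≤ (x + d, y + a)}

/-- The `(2,1)`-interval encoded by the parameter vector `v = (x,y,a,b,c,d) ∈ ℝ⁶`. -/
def int21v (v : Fin 6 → ℝ) : Set (ℝ × ℝ) :=
  int21 (v 0) (v 1) (v 2) (v 3) (v 4) (v 5)

/-- Nonnegativity of the lengths `a, b, c, d` in the parameter vector. -/
def NonnegParams (v : Fin 6 → ℝ) : Prop :=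
  0 ≤ v 2 ∧ 0 ≤ v 3 ∧ 0 ≤ v 4 ∧ 0 ≤ v 5

lemma sub_thick (x₁ y₁ a b c d x₂ y₂ e f g h ε : ℝ)
    (ha : 0 ≤ a) (hb : 0 ≤ b) (hc : 0 ≤ c) (hd : 0 ≤ d)
    (hx : |x₁ - x₂| ≤ ε) (hy : |y₁ - y₂| ≤ ε) (hae : |a - e| ≤ ε)
    (hbf : |b - f| ≤ ε) (hcg : |c - g| ≤ ε) (hdh : |d - h| ≤ ε) :
    int21 x₂ y₂ e f g h ⊆ thick2 (int21 x₁ y₁ a b c d) (2 * ε) := by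
  rw [abs_sub_le_iff] at hx hy hae hbf hcg hdh
  intro p hp
  obtain ⟨hmin, hmax1', hmax2'⟩ := hp
  have hmax1 : p.1 ≤ x₂ + h := hmax1'
  have hmax2 : p.2 ≤ y₂ + e := hmax2'
  simp only [thick2, Set.mem_iUnion, int21, supBall2, Set.mem_setOf_eq, Prod.mk_le_mk]
  rcases hmin with hm | hm
  · obtain ⟨h1', h2'⟩ := hm
    have h1 : x₂ - f ≤ p.1 := h1'
    have h2 : y₂ ≤ p.2 := h2'
    refine ⟨(min (max p.1 (x₁ - b)) (x₁ + d), min (max p.2 y₁) (y₁ + a)),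
      ⟨Or.inl ⟨le_min (le_max_right _ _) (by dsimp only; linarith), le_min (le_max_right _ _) (by dsimp only; linarith)⟩,
        min_le_right _ _, min_le_right _ _⟩, ?_, ?_, ?_, ?_⟩
    · rcases max_cases p.1 (x₁ - b) with ⟨heq, _⟩ | ⟨heq, _⟩ <;>
        simp only [] <;> linarith [min_le_left (max p.1 (x₁ - b)) (x₁ + d)]
    · rcases max_cases p.2 y₁ with ⟨heq, _⟩ | ⟨heq, _⟩ <;>
        simp only [] <;> linarith [min_le_left (max p.2 y₁) (y₁ + a)]
    · rcases min_cases (max p.1 (x₁ - b)) (x₁ + d) with ⟨heq, _⟩ | ⟨heq, _⟩ <;>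
        simp only [] <;> rw [heq] <;> [skip; linarith] <;>
        linarith [le_max_left p.1 (x₁ - b)]
    · rcases min_cases (max p.2 y₁) (y₁ + a) with ⟨heq, _⟩ | ⟨heq, _⟩ <;>
        simp only [] <;> rw [heq] <;> [skip; linarith] <;>
        linarith [le_max_left p.2 y₁]
  · obtain ⟨h1', h2'⟩ := hm
    have h1 : x₂ ≤ p.1 := h1'
    have h2 : y₂ - g ≤ p.2 := h2'
    refine ⟨(min (max p.1 x₁) (x₁ + d), min (max p.2 (y₁ - c)) (y₁ + a)),
      ⟨Or.inr ⟨le_min (le_max_right _ _) (by dsimp only; linarith), le_min (le_max_right _ _) (by dsimp only; linarith)⟩,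
        min_le_right _ _, min_le_right _ _⟩, ?_, ?_, ?_, ?_⟩
    · rcases max_cases p.1 x₁ with ⟨heq, _⟩ | ⟨heq, _⟩ <;>
        simp only [] <;> linarith [min_le_left (max p.1 x₁) (x₁ + d)]
    · rcases max_cases p.2 (y₁ - c) with ⟨heq, _⟩ | ⟨heq, _⟩ <;>
        simp only [] <;> linarith [min_le_left (max p.2 (y₁ - c)) (y₁ + a)]
    · rcases min_cases (max p.1 x₁) (x₁ + d) with ⟨heq, _⟩ | ⟨heq, _⟩ <;>
        simp only [] <;> rw [heq] <;> [skip; linarith] <;>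
        linarith [le_max_left p.1 x₁]
    · rcases min_cases (max p.2 (y₁ - c)) (y₁ + a) with ⟨heq, _⟩ | ⟨heq, _⟩ <;>
        simp only [] <;> rw [heq] <;> [skip; linarith] <;>
        linarith [le_max_left p.2 (y₁ - c)]


/-- If the `ℝ⁶` parameter vectors of two `(2,1)`-intervals `I`, `J` of `ℝ²` are
at sup-distance at most `ε`, then the minimal common containment threshold
`inf{δ ≥ 0 : J ⊆ I^δ ∧ I ⊆ J^δ}` is at most `2ε`. -/
theorem threshold_le_two_eps (x₁ y₁ a b c d x₂ y₂ e f g h ε : ℝ)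
    (ha : 0 ≤ a) (hb : 0 ≤ b) (hc : 0 ≤ c) (hd : 0 ≤ d)
    (he : 0 ≤ e) (hf : 0 ≤ f) (hg : 0 ≤ g) (hh : 0 ≤ h)
    (hv : ‖(![x₁, y₁, a, b, c, d] - ![x₂, y₂, e, f, g, h] : Fin 6 → ℝ)‖ ≤ ε) :
    sInf {δ : ℝ | 0 ≤ δ ∧ int21 x₂ y₂ e f g h ⊆ thick2 (int21 x₁ y₁ a b c d) δ ∧
        int21 x₁ y₁ a b c d ⊆ thick2 (int21 x₂ y₂ e f g h) δ} ≤ 2 * ε := by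
  have hcomp : ∀ i : Fin 6, |(![x₁, y₁, a, b, c, d] - ![x₂, y₂, e, f, g, h] : Fin 6 → ℝ) i| ≤ ε :=
    fun i => le_trans (by simpa using norm_le_pi_norm (![x₁, y₁, a, b, c, d] - ![x₂, y₂, e, f, g, h] : Fin 6 → ℝ) i) hv
  have hx := hcomp 0
  have hy := hcomp 1
  have hae := hcomp 2
  have hbf := hcomp 3
  have hcg := hcomp 4
  have hdh := hcomp 5
  simp only [Pi.sub_apply, Matrix.cons_val_zero, Matrix.cons_val_one, Matrix.head_cons,
    Matrix.cons_val_two, Matrix.tail_cons, Matrix.cons_val_three, Matrix.cons_val_four,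
    Matrix.cons_val_fin_one] at hx hy hae hbf hcg hdh
  have hε : 0 ≤ ε := le_trans (abs_nonneg _) hx
  apply csInf_le
  · exact ⟨0, fun δ hδ => hδ.1⟩
  · exact ⟨by linarith, sub_thick x₁ y₁ a b c d x₂ y₂ e f g h ε ha hb hc hd hx hy hae hbf hcg hdh,
      sub_thick x₂ y₂ e f g h x₁ y₁ a b c d ε he hf hg hh (abs_sub_comm x₁ x₂ ▸ hx)
        (abs_sub_comm y₁ y₂ ▸ hy) (abs_sub_comm a e ▸ hae) (abs_sub_comm b f ▸ hbf)
        (abs_sub_comm c g ▸ hcg) (abs_sub_comm d h ▸ hdh)⟩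
end

section
/- Lipschitz stability of the sparsified loss: let K be a finite family of (1,1)- or (2,1)-intervals of ℝ², and let J₁, J₂ be two n-element families of (1,1)- or (2,1)-intervals. Then |d̂(K, J₁) − d̂(K, J₂)| ≤ 2 · min_π ‖v_{π(J₁)} − v_{J₂}‖_∞, where the minimum ranges over all bijections π matching J₁ with J₂ and v denotes the concatenated ℝ^{6n} parametrization. -/
/-- A correspondence: a left- and right-total relation `R ⊆ A × B`. -/
def IsCorr2 (A B : Set (Set (ℝ × ℝ))) (R : Set (Set (ℝ × ℝ) × Set (ℝ × ℝ))) : Prop :=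
  R ⊆ A ×ˢ B ∧ (∀ I ∈ A, ∃ J ∈ B, (I, J) ∈ R) ∧ (∀ J ∈ B, ∃ I ∈ A, (I, J) ∈ R)

/-- An `ε`-correspondence between families of intervals of `ℝ²`. -/
def IsEpsCorr2 (A B : Set (Set (ℝ × ℝ))) (ε : ℝ)
    (R : Set (Set (ℝ × ℝ) × Set (ℝ × ℝ))) : Prop :=
  IsCorr2 A B R ∧ ∀ p ∈ R, p.2 ⊆ thick2 p.1 ε ∧ p.1 ⊆ thick2 p.2 ε

open scoped ENNReal

/-- `d̂(𝓘,𝓙) := inf {ε > 0 : ∃ an ε-correspondence between 𝓘 and 𝓙}`, with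
`inf ∅ = ∞`. -/
noncomputable def dhat2 (A B : Set (Set (ℝ × ℝ))) : ℝ≥0∞ :=
  sInf (ENNReal.ofReal '' {ε : ℝ | 0 < ε ∧ ∃ R, IsEpsCorr2 A B ε R})

section LossLipschitzAux

lemma supBall2_trans' {r p q : ℝ × ℝ} {e1 e2 : ℝ} (h1 : p ∈ supBall2 r e1)
    (h2 : q ∈ supBall2 p e2) : q ∈ supBall2 r (e1 + e2) := by
  obtain ⟨a1, a2, a3, a4⟩ := h1
  obtain ⟨b1, b2, b3, b4⟩ := h2
  exact ⟨by linarith, by linarith, by linarith, by linarith⟩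

lemma thick2_trans' {S T U : Set (ℝ × ℝ)} {e1 e2 : ℝ} (h1 : S ⊆ thick2 T e1)
    (h2 : T ⊆ thick2 U e2) : S ⊆ thick2 U (e2 + e1) := by
  intro q hq
  obtain ⟨t, ht, hqt⟩ : ∃ t ∈ T, q ∈ supBall2 t e1 := by
    simpa [thick2] using h1 hq
  obtain ⟨u, hu, htu⟩ : ∃ u ∈ U, t ∈ supBall2 u e2 := by
    simpa [thick2] using h2 ht
  exact Set.mem_biUnion hu (supBall2_trans' htu hqt)

lemma comp_epsCorr' {A B C : Set (Set (ℝ × ℝ))} {e1 e2 : ℝ}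
    {R1 R2 : Set (Set (ℝ × ℝ) × Set (ℝ × ℝ))}
    (h1 : IsEpsCorr2 A B e1 R1) (h2 : IsEpsCorr2 B C e2 R2) :
    IsEpsCorr2 A C (e1 + e2) {p | ∃ M, (p.1, M) ∈ R1 ∧ (M, p.2) ∈ R2} := by
  obtain ⟨⟨hs1, hl1, hr1⟩, hq1⟩ := h1
  obtain ⟨⟨hs2, hl2, hr2⟩, hq2⟩ := h2
  refine ⟨⟨?_, ?_, ?_⟩, ?_⟩
  · rintro ⟨I, J⟩ ⟨M, hIM, hMJ⟩
    exact ⟨(hs1 hIM).1, (hs2 hMJ).2⟩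
  · intro I hI
    obtain ⟨M, hM, hIM⟩ := hl1 I hI
    obtain ⟨J, hJ, hMJ⟩ := hl2 M hM
    exact ⟨J, hJ, M, hIM, hMJ⟩
  · intro J hJ
    obtain ⟨M, hM, hMJ⟩ := hr2 J hJ
    obtain ⟨I, hI, hIM⟩ := hr1 M hM
    exact ⟨I, hI, M, hIM, hMJ⟩
  · rintro ⟨I, J⟩ ⟨M, hIM, hMJ⟩
    have q1 := hq1 _ hIM
    have q2 := hq2 _ hMJ
    refine ⟨thick2_trans' q2.1 q1.1, ?_⟩
    have := thick2_trans' q1.2 q2.2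
    rwa [add_comm] at this

lemma epsCorr_symm' {A B : Set (Set (ℝ × ℝ))} {ε : ℝ}
    {R : Set (Set (ℝ × ℝ) × Set (ℝ × ℝ))} (h : IsEpsCorr2 A B ε R) :
    IsEpsCorr2 B A ε (Prod.swap ⁻¹' R) := by
  obtain ⟨⟨hs, hl, hr⟩, hq⟩ := h
  refine ⟨⟨?_, ?_, ?_⟩, ?_⟩
  · rintro ⟨J, I⟩ hp
    exact ⟨(hs hp).2, (hs hp).1⟩
  · intro J hJ
    obtain ⟨I, hI, h⟩ := hr J hJ
    exact ⟨I, hI, h⟩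
  · intro I hI
    obtain ⟨J, hJ, h⟩ := hl I hI
    exact ⟨J, hJ, h⟩
  · rintro ⟨J, I⟩ hp
    exact ⟨(hq _ hp).2, (hq _ hp).1⟩

lemma dhat2_le_add' {A B C : Set (Set (ℝ × ℝ))} {e : ℝ}
    {R2 : Set (Set (ℝ × ℝ) × Set (ℝ × ℝ))}
    (h2 : IsEpsCorr2 B C e R2) (he : 0 ≤ e) :
    dhat2 A C ≤ dhat2 A B + ENNReal.ofReal e := by
  have hrw : dhat2 A B + ENNReal.ofReal e =
      ⨅ b ∈ ENNReal.ofReal '' {ε : ℝ | 0 < ε ∧ ∃ R, IsEpsCorr2 A B ε R},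
        b + ENNReal.ofReal e := ENNReal.sInf_add
  rw [hrw]
  refine le_iInf₂ fun x hx => ?_
  obtain ⟨ε, ⟨hε, R1, hR1⟩, rfl⟩ := hx
  have hmem : dhat2 A C ≤ ENNReal.ofReal (ε + e) :=
    sInf_le ⟨ε + e, ⟨by linarith, _, comp_epsCorr' hR1 h2⟩, rfl⟩
  calc dhat2 A C ≤ ENNReal.ofReal (ε + e) := hmem
    _ = ENNReal.ofReal ε + ENNReal.ofReal e := ENNReal.ofReal_add hε.le he

lemma clamp_spec' {lo hi t δ : ℝ} (hlh : lo ≤ hi) (hδ : 0 ≤ δ)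
    (h1 : lo - δ ≤ t) (h2 : t ≤ hi + δ) :
    lo ≤ min (max t lo) hi ∧ min (max t lo) hi ≤ hi ∧
      min (max t lo) hi - δ ≤ t ∧ t ≤ min (max t lo) hi + δ := by
  rcases le_total t lo with h | h
  · rw [max_eq_right h, min_eq_left hlh]
    exact ⟨le_rfl, hlh, by linarith, by linarith⟩
  · rw [max_eq_left h]
    rcases le_total t hi with h' | h'
    · rw [min_eq_left h']
      exact ⟨h, h', by linarith, by linarith⟩
    · rw [min_eq_right h']
      exact ⟨hlh, le_rfl, by linarith, by linarith⟩

lemma int21v_subset_thick' {v w : Fin 6 → ℝ} (hv : NonnegParams v) {ε : ℝ}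
    (hε : 0 ≤ ε) (h : ∀ j, |v j - w j| ≤ ε) :
    int21v w ⊆ thick2 (int21v v) (2 * ε) := by
  obtain ⟨hv2, hv3, hv4, hv5⟩ := hv
  intro q hq
  obtain ⟨hlo, hhi⟩ := hq
  have h0 := abs_le.mp (h 0); have h1 := abs_le.mp (h 1)
  have h2 := abs_le.mp (h 2); have h3 := abs_le.mp (h 3)
  have h4 := abs_le.mp (h 4); have h5 := abs_le.mp (h 5)
  have hhi1 : q.1 ≤ w 0 + w 5 := hhi.1
  have hhi2 : q.2 ≤ w 1 + w 2 := hhi.2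
  have h2e : (0:ℝ) ≤ 2 * ε := by linarith
  rcases hlo with hl | hl
  · have hq1 : w 0 - w 3 ≤ q.1 := hl.1
    have hq2 : w 1 ≤ q.2 := hl.2
    obtain ⟨c1a, c1b, c1c, c1d⟩ := clamp_spec' (t := q.1)
      (show v 0 - v 3 ≤ v 0 + v 5 by linarith) h2e
      (by linarith) (by linarith)
    obtain ⟨c2a, c2b, c2c, c2d⟩ := clamp_spec' (t := q.2)
      (show v 1 ≤ v 1 + v 2 by linarith) h2e
      (by linarith) (by linarith)
    have hmem : (min (max q.1 (v 0 - v 3)) (v 0 + v 5),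
        min (max q.2 (v 1)) (v 1 + v 2)) ∈ int21v v :=
      ⟨Or.inl ⟨c1a, c2a⟩, c1b, c2b⟩
    exact Set.mem_biUnion hmem ⟨c1c, c2c, c1d, c2d⟩
  · have hq1 : w 0 ≤ q.1 := hl.1
    have hq2 : w 1 - w 4 ≤ q.2 := hl.2
    obtain ⟨c1a, c1b, c1c, c1d⟩ := clamp_spec' (t := q.1)
      (show v 0 ≤ v 0 + v 5 by linarith) h2e
      (by linarith) (by linarith)
    obtain ⟨c2a, c2b, c2c, c2d⟩ := clamp_spec' (t := q.2)
      (show v 1 - v 4 ≤ v 1 + v 2 by linarith) h2e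
      (by linarith) (by linarith)
    have hmem : (min (max q.1 (v 0)) (v 0 + v 5),
        min (max q.2 (v 1 - v 4)) (v 1 + v 2)) ∈ int21v v :=
      ⟨Or.inr ⟨c1a, c2a⟩, c1b, c2b⟩
    exact Set.mem_biUnion hmem ⟨c1c, c2c, c1d, c2d⟩

lemma range_epsCorr' {n : ℕ} {w₁ w₂ : Fin (n + 1) → Fin 6 → ℝ}
    (h₁ : ∀ i, NonnegParams (w₁ i)) (h₂ : ∀ i, NonnegParams (w₂ i))
    (π : Equiv.Perm (Fin (n + 1))) {m : ℝ} (hm : 0 ≤ m)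
    (hb : ∀ i j, |w₁ (π i) j - w₂ i j| ≤ m) :
    IsEpsCorr2 (Set.range fun i => int21v (w₁ i)) (Set.range fun i => int21v (w₂ i))
      (2 * m) (Set.range fun i => (int21v (w₁ (π i)), int21v (w₂ i))) := by
  refine ⟨⟨?_, ?_, ?_⟩, ?_⟩
  · rintro p ⟨i, rfl⟩
    exact ⟨⟨π i, rfl⟩, ⟨i, rfl⟩⟩
  · rintro I ⟨j, rfl⟩
    refine ⟨int21v (w₂ (π.symm j)), ⟨π.symm j, rfl⟩, ⟨π.symm j, ?_⟩⟩
    simp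
  · rintro J ⟨i, rfl⟩
    exact ⟨int21v (w₁ (π i)), ⟨π i, rfl⟩, ⟨i, rfl⟩⟩
  · rintro p ⟨i, rfl⟩
    constructor
    · exact int21v_subset_thick' (h₁ (π i)) hm (hb i)
    · refine int21v_subset_thick' (h₂ i) hm fun j => ?_
      rw [abs_sub_comm]
      exact hb i j

lemma int21v_bnd' {v : Fin 6 → ℝ} (hv : NonnegParams v) :
    (v 0 + v 5, v 1 + v 2) ∈ int21v v ∧
      ∀ p ∈ int21v v, |p.1| ≤ |v 0| + |v 1| + |v 2| + |v 3| + |v 4| + |v 5| ∧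
        |p.2| ≤ |v 0| + |v 1| + |v 2| + |v 3| + |v 4| + |v 5| := by
  obtain ⟨hv2, hv3, hv4, hv5⟩ := hv
  have e0 := le_abs_self (v 0); have e0' := neg_abs_le (v 0)
  have e1 := le_abs_self (v 1); have e1' := neg_abs_le (v 1)
  have e2 := le_abs_self (v 2); have e2' := abs_nonneg (v 2)
  have e3 := le_abs_self (v 3); have e3' := abs_nonneg (v 3)
  have e4 := le_abs_self (v 4); have e4' := abs_nonneg (v 4)
  have e5 := le_abs_self (v 5); have e5' := abs_nonneg (v 5)
  constructor
  · exact ⟨Or.inl ⟨by dsimp; linarith, by dsimp; linarith⟩, le_refl _⟩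
  · intro p hp
    obtain ⟨hl, hhi⟩ := hp
    have hh1 : p.1 ≤ v 0 + v 5 := hhi.1
    have hh2 : p.2 ≤ v 1 + v 2 := hhi.2
    constructor <;> rw [abs_le] <;> constructor
    · rcases hl with hl | hl
      · have hx : v 0 - v 3 ≤ p.1 := hl.1
        linarith
      · have hx : v 0 ≤ p.1 := hl.1
        linarith
    · linarith
    · rcases hl with hl | hl
      · have hx : v 1 ≤ p.2 := hl.2
        linarith
      · have hx : v 1 - v 4 ≤ p.2 := hl.2
        linarith
    · linarith

lemma dhat2_ne_top_of_bounded' {A B : Set (Set (ℝ × ℝ))} (hA : A.Nonempty)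
    (hB : B.Nonempty) (C : ℝ)
    (hA' : ∀ I ∈ A, I.Nonempty ∧ ∀ p ∈ I, |p.1| ≤ C ∧ |p.2| ≤ C)
    (hB' : ∀ J ∈ B, J.Nonempty ∧ ∀ p ∈ J, |p.1| ≤ C ∧ |p.2| ≤ C) :
    dhat2 A B ≠ ⊤ := by
  have hC0 : 0 ≤ C := by
    obtain ⟨I, hI⟩ := hA
    obtain ⟨⟨p, hp⟩, hbd⟩ := hA' I hI
    exact le_trans (abs_nonneg _) (hbd p hp).1
  have key : ∀ I J : Set (ℝ × ℝ), I.Nonempty → (∀ p ∈ I, |p.1| ≤ C ∧ |p.2| ≤ C) →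
      (∀ p ∈ J, |p.1| ≤ C ∧ |p.2| ≤ C) → J ⊆ thick2 I (2 * C + 1) := by
    rintro I J ⟨p, hp⟩ hI hJ q hq
    have h1 := abs_le.mp (hI p hp).1
    have h2 := abs_le.mp (hI p hp).2
    have h3 := abs_le.mp (hJ q hq).1
    have h4 := abs_le.mp (hJ q hq).2
    exact Set.mem_biUnion hp ⟨by linarith, by linarith, by linarith, by linarith⟩
  have hmem : ENNReal.ofReal (2 * C + 1) ∈
      ENNReal.ofReal '' {ε : ℝ | 0 < ε ∧ ∃ R, IsEpsCorr2 A B ε R} := by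
    refine ⟨2 * C + 1, ⟨by linarith, A ×ˢ B, ⟨⟨Set.Subset.rfl, ?_, ?_⟩, ?_⟩⟩, rfl⟩
    · intro I hI
      obtain ⟨J, hJ⟩ := hB
      exact ⟨J, hJ, hI, hJ⟩
    · intro J hJ
      obtain ⟨I, hI⟩ := hA
      exact ⟨I, hI, hI, hJ⟩
    · rintro ⟨I, J⟩ ⟨hI, hJ⟩
      exact ⟨key I J (hA' I hI).1 (hA' I hI).2 (hB' J hJ).2,
        key J I (hB' J hJ).1 (hB' J hJ).2 (hA' I hI).2⟩
  exact ne_top_of_le_ne_top ENNReal.ofReal_ne_top (sInf_le hmem)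

end LossLipschitzAux
/-- Lipschitz stability of the sparsified loss: for a finite family `K` of
`(1,1)`- or `(2,1)`-intervals and two `n`-element parametrized families
`J₁, J₂`, `|d̂(K,J₁) − d̂(K,J₂)| ≤ 2 · min_π ‖v_{π(J₁)} − v_{J₂}‖_∞`, the
minimum ranging over all bijections matching `J₁` with `J₂`. -/
theorem loss_lipschitz (K : Finset (Set (ℝ × ℝ))) (hKne : K.Nonempty)
    (hKint : ∀ I ∈ K, ∃ v : Fin 6 → ℝ, NonnegParams v ∧ I = int21v v)
    (n : ℕ) (w₁ w₂ : Fin (n + 1) → Fin 6 → ℝ)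
    (h₁ : ∀ i, NonnegParams (w₁ i)) (h₂ : ∀ i, NonnegParams (w₂ i)) :
    |(dhat2 ↑K (Set.range fun i => int21v (w₁ i))).toReal -
        (dhat2 ↑K (Set.range fun i => int21v (w₂ i))).toReal| ≤
      2 * Finset.univ.inf' Finset.univ_nonempty
        (fun π : Equiv.Perm (Fin (n + 1)) =>
          Finset.univ.sup' Finset.univ_nonempty fun i => ‖w₁ (π i) - w₂ i‖) := by
  classical
  set m := Finset.univ.inf' Finset.univ_nonempty
      (fun π : Equiv.Perm (Fin (n + 1)) =>
        Finset.univ.sup' Finset.univ_nonempty fun i => ‖w₁ (π i) - w₂ i‖) with hm_def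
  obtain ⟨π, -, hπ⟩ := Finset.exists_mem_eq_inf' (Finset.univ_nonempty)
    (fun π : Equiv.Perm (Fin (n + 1)) =>
      Finset.univ.sup' Finset.univ_nonempty fun i => ‖w₁ (π i) - w₂ i‖)
  have hsup : ∀ i, ‖w₁ (π i) - w₂ i‖ ≤ m := by
    intro i
    rw [hm_def, hπ]
    exact Finset.le_sup' (fun i => ‖w₁ (π i) - w₂ i‖) (Finset.mem_univ i)
  have hm0 : 0 ≤ m := le_trans (norm_nonneg _) (hsup 0)
  have hb : ∀ i j, |w₁ (π i) j - w₂ i j| ≤ m := by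
    intro i j
    have h := (norm_le_pi_norm (w₁ (π i) - w₂ i) j).trans (hsup i)
    simpa [Real.norm_eq_abs] using h
  have hcorr := range_epsCorr' h₁ h₂ π hm0 hb
  have h2m : (0:ℝ) ≤ 2 * m := by linarith
  have ineq1 : dhat2 ↑K (Set.range fun i => int21v (w₂ i)) ≤
      dhat2 ↑K (Set.range fun i => int21v (w₁ i)) + ENNReal.ofReal (2 * m) :=
    dhat2_le_add' hcorr h2m
  have ineq2 : dhat2 ↑K (Set.range fun i => int21v (w₁ i)) ≤
      dhat2 ↑K (Set.range fun i => int21v (w₂ i)) + ENNReal.ofReal (2 * m) :=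
    dhat2_le_add' (epsCorr_symm' hcorr) h2m
  -- finiteness
  choose vK hvK hvKe using hKint
  set Bf : (Fin 6 → ℝ) → ℝ :=
    fun v => |v 0| + |v 1| + |v 2| + |v 3| + |v 4| + |v 5| with hBf
  set C : ℝ := (K.attach.sup' hKne.attach fun I => Bf (vK I.1 I.2)) ⊔
      ((Finset.univ.sup' Finset.univ_nonempty fun i => Bf (w₁ i)) ⊔
        (Finset.univ.sup' Finset.univ_nonempty fun i => Bf (w₂ i))) with hC
  have hCK : ∀ I ∈ (K : Set (Set (ℝ × ℝ))), I.Nonempty ∧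
      ∀ p ∈ I, |p.1| ≤ C ∧ |p.2| ≤ C := by
    intro I hI
    have hI' : I ∈ K := hI
    obtain ⟨hmem, hbd⟩ := int21v_bnd' (hvK I hI')
    have hle : Bf (vK I hI') ≤ C :=
      le_sup_of_le_left (Finset.le_sup' (fun I => Bf (vK I.1 I.2)) (Finset.mem_attach K ⟨I, hI'⟩))
    refine ⟨?_, fun p hp => ?_⟩
    · rw [hvKe I hI']
      exact ⟨_, hmem⟩
    · rw [hvKe I hI'] at hp
      exact ⟨(hbd p hp).1.trans hle, (hbd p hp).2.trans hle⟩
  have hCB : ∀ w : Fin (n + 1) → Fin 6 → ℝ, (∀ i, NonnegParams (w i)) →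
      (∀ i, Bf (w i) ≤ C) →
      ∀ J ∈ Set.range fun i => int21v (w i), J.Nonempty ∧
        ∀ p ∈ J, |p.1| ≤ C ∧ |p.2| ≤ C := by
    rintro w hw hwC J ⟨i, rfl⟩
    obtain ⟨hmem, hbd⟩ := int21v_bnd' (hw i)
    exact ⟨⟨_, hmem⟩, fun p hp =>
      ⟨(hbd p hp).1.trans (hwC i), (hbd p hp).2.trans (hwC i)⟩⟩
  have hKne' : (K : Set (Set (ℝ × ℝ))).Nonempty := by
    exact_mod_cast hKne.to_set
  have hfin1 : dhat2 ↑K (Set.range fun i => int21v (w₁ i)) ≠ ⊤ :=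
    dhat2_ne_top_of_bounded' hKne' (Set.range_nonempty _) C hCK
      (hCB w₁ h₁ fun i => le_sup_of_le_right
        (le_sup_of_le_left (Finset.le_sup' (fun i => Bf (w₁ i)) (Finset.mem_univ i))))
  have hfin2 : dhat2 ↑K (Set.range fun i => int21v (w₂ i)) ≠ ⊤ :=
    dhat2_ne_top_of_bounded' hKne' (Set.range_nonempty _) C hCK
      (hCB w₂ h₂ fun i => le_sup_of_le_right
        (le_sup_of_le_right (Finset.le_sup' (fun i => Bf (w₂ i)) (Finset.mem_univ i))))
  rw [abs_sub_le_iff]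
  constructor
  · have h' := ENNReal.toReal_mono
      (ENNReal.add_ne_top.2 ⟨hfin2, ENNReal.ofReal_ne_top⟩) ineq2
    rw [ENNReal.toReal_add hfin2 ENNReal.ofReal_ne_top,
      ENNReal.toReal_ofReal h2m] at h'
    linarith
  · have h' := ENNReal.toReal_mono
      (ENNReal.add_ne_top.2 ⟨hfin1, ENNReal.ofReal_ne_top⟩) ineq1
    rw [ENNReal.toReal_add hfin1 ENNReal.ofReal_ne_top,
      ENNReal.toReal_ofReal h2m] at h'
    linarith
end

section
/- There is no constant c > 0 such that for all finite families K, J₁, J₂ of (2,1)-intervals of ℝ² with |J₁| = |J₂|, the inequality |d̂(K, J₁) − d̂(K, J₂)| ≥ c · min_π ‖v_{π(J₁)} − v_{J₂}‖_∞ holds; i.e., the correspondence distance can vanish (or be arbitrarily small) while the parametrized vectorization distance remains bounded below. -/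
open scoped ENNReal

/-- There is no constant `c > 0` such that for all finite families `K` of
`(2,1)`-intervals and all equal-size parametrized families `J₁`, `J₂` of
`(2,1)`-intervals, `|d̂(K,J₁) − d̂(K,J₂)| ≥ c · min_π ‖v_{π(J₁)} − v_{J₂}‖_∞`:
the correspondence distance can vanish while the vectorization distance stays
bounded below. -/
theorem no_reverse_lipschitz :
    ¬ ∃ c : ℝ, 0 < c ∧
      ∀ (n : ℕ) (K : Finset (Set (ℝ × ℝ))), K.Nonempty →
        (∀ I ∈ K, ∃ v : Fin 6 → ℝ, NonnegParams v ∧ I = int21v v) →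
        ∀ w₁ w₂ : Fin (n + 1) → Fin 6 → ℝ,
          (∀ i, NonnegParams (w₁ i)) → (∀ i, NonnegParams (w₂ i)) →
          c * Finset.univ.inf' Finset.univ_nonempty
              (fun π : Equiv.Perm (Fin (n + 1)) =>
                Finset.univ.sup' Finset.univ_nonempty fun i => ‖w₁ (π i) - w₂ i‖) ≤
            |(dhat2 ↑K (Set.range fun i => int21v (w₁ i))).toReal -
              (dhat2 ↑K (Set.range fun i => int21v (w₂ i))).toReal| := by
  rintro ⟨c, hc, H⟩
  -- the same interval `[-1,0] × {0}` under two different parametrizations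
  set v₁ : Fin 6 → ℝ := ![0, 0, 0, 1, 0, 0] with hv1
  set v₂ : Fin 6 → ℝ := ![-1, 0, 0, 0, 0, 1] with hv2
  have e10 : v₁ 0 = 0 := rfl
  have e11 : v₁ 1 = 0 := rfl
  have e12 : v₁ 2 = 0 := rfl
  have e13 : v₁ 3 = 1 := rfl
  have e14 : v₁ 4 = 0 := rfl
  have e15 : v₁ 5 = 0 := rfl
  have e20 : v₂ 0 = -1 := rfl
  have e21 : v₂ 1 = 0 := rfl
  have e22 : v₂ 2 = 0 := rfl
  have e23 : v₂ 3 = 0 := rfl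
  have e24 : v₂ 4 = 0 := rfl
  have e25 : v₂ 5 = 1 := rfl
  have hn1 : NonnegParams v₁ := by
    refine ⟨?_, ?_, ?_, ?_⟩ <;> rw [show (0:ℝ) = 0 from rfl] <;>
      first
        | (rw [e12]) | (rw [e13]) | (rw [e14]) | (rw [e15])
    all_goals norm_num
  have hn2 : NonnegParams v₂ := by
    refine ⟨?_, ?_, ?_, ?_⟩
    · rw [e22]
    · rw [e23]
    · rw [e24]
    · rw [e25]; norm_num
  have hset : int21v v₁ = int21v v₂ := by
    ext p
    simp only [int21v, int21, Set.mem_setOf_eq, Prod.le_def,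
      e10, e11, e12, e13, e14, e15, e20, e21, e22, e23, e24, e25]
    norm_num
    intros
    exact ⟨by linarith, by linarith⟩
  have key := H 0 {int21v v₂} ⟨_, Finset.mem_singleton_self _⟩
    (by
      intro I hI
      exact ⟨v₂, hn2, by simpa using hI⟩)
    (fun _ => v₁) (fun _ => v₂) (fun _ => hn1) (fun _ => hn2)
  have hranges : (Set.range fun _ : Fin 1 => int21v v₁) =
      (Set.range fun _ : Fin 1 => int21v v₂) := by rw [hset]
  rw [hranges, sub_self, abs_zero] at key
  have hinf : (Finset.univ.inf' Finset.univ_nonempty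
      (fun π : Equiv.Perm (Fin 1) =>
        Finset.univ.sup' Finset.univ_nonempty fun i : Fin 1 =>
          ‖(fun _ : Fin 1 => v₁) (π i) - (fun _ : Fin 1 => v₂) i‖)) = ‖v₁ - v₂‖ := by
    have : (fun π : Equiv.Perm (Fin 1) =>
        Finset.univ.sup' Finset.univ_nonempty fun i : Fin 1 =>
          ‖(fun _ : Fin 1 => v₁) (π i) - (fun _ : Fin 1 => v₂) i‖) =
        fun _ => ‖v₁ - v₂‖ := by
      funext π
      simp [Finset.sup'_const]
    rw [this, Finset.inf'_const]
  rw [hinf] at key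
  have hne : v₁ - v₂ ≠ 0 := by
    intro h
    have h0 := congrFun h 0
    rw [Pi.sub_apply, e10, e20, Pi.zero_apply] at h0
    norm_num at h0
  have hpos : 0 < ‖v₁ - v₂‖ := norm_pos_iff.mpr hne
  nlinarith
end
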